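/- For every natural number d ≥ 1 there exist a non-unital star-subalgebra B of ℓ∞ and an element g ∈ B such that: every element of B lying in c0 equals 0; B has ℂ-dimension d (Module.finrank ℂ B = d); and B coincides with the non-unital subalgebra of ℓ∞ generated by g, i.e. NonUnitalAlgebra.adjoin ℂ {g} = B (so B is generated by a single element as an algebra, without taking closures). -/

import Mathlib

open Filter Topology ENNReal

noncomputable section

/-- `ℓ∞`, the bounded complex sequences. -/
abbrev linf : Type := lp (fun _ : ℕ => ℂ) ∞

/-- `c₀`, the elements of `ℓ∞` tending to zero. -/
def c0 : Set linf := {f | Tendsto (fun n => (f : ∀ _ : ℕ, ℂ) n) atTop (𝓝 0)}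

section Aux

variable {d : ℕ} (hd : 1 ≤ d)

/-- Periodic extension of a `d`-tuple. -/
def phifun (hd : 1 ≤ d) (v : Fin d → ℂ) : ℕ → ℂ :=
  fun n => v ⟨n % d, Nat.mod_lt n hd⟩

lemma phifun_memℓp (v : Fin d → ℂ) : Memℓp (phifun hd v) ∞ := by
  apply memℓp_infty
  apply Set.Finite.bddAbove
  apply Set.Finite.subset (Set.finite_range fun i : Fin d => ‖v i‖)
  rintro x ⟨n, rfl⟩
  exact ⟨_, rfl⟩

/-- The embedding of `ℂ^d` into `ℓ∞` as periodic sequences, as a non-unital algebra hom. -/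
def phi (hd : 1 ≤ d) : (Fin d → ℂ) →ₙₐ[ℂ] linf where
  toFun v := ⟨phifun hd v, phifun_memℓp hd v⟩
  map_add' v w := by ext n; rfl
  map_mul' v w := by ext n; rfl
  map_smul' c v := by ext n; rfl
  map_zero' := by ext n; rfl

lemma phi_apply (v : Fin d → ℂ) (n : ℕ) :
    (phi hd v : ∀ _ : ℕ, ℂ) n = v ⟨n % d, Nat.mod_lt n hd⟩ := rfl

lemma phi_injective : Function.Injective (phi hd) := by
  intro v w h
  funext i
  have := congrArg (fun f : linf => (f : ∀ _ : ℕ, ℂ) (i : ℕ)) h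
  simpa [phi_apply, Nat.mod_eq_of_lt i.isLt, Fin.eta] using this

/-- The distinguished tuple with distinct nonzero entries. -/
def vv (d : ℕ) : Fin d → ℂ := fun i => (i : ℕ) + 1

lemma vv_injective : Function.Injective (vv d) := by
  intro i j h
  have : ((i : ℕ) : ℂ) = ((j : ℕ) : ℂ) := by
    simpa [vv] using h
  exact Fin.ext (by exact_mod_cast this)

lemma vv_ne_zero (i : Fin d) : vv d i ≠ 0 := by
  simp only [vv]
  intro h
  have : ((i : ℕ) + 1 : ℂ) = 0 := h
  exact_mod_cast this

lemma pow_mem_adjoin (v : Fin d → ℂ) (k : ℕ) :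
    v ^ (k + 1) ∈ NonUnitalAlgebra.adjoin ℂ ({v} : Set (Fin d → ℂ)) := by
  induction k with
  | zero => simpa using NonUnitalAlgebra.self_mem_adjoin_singleton ℂ v
  | succ k ih =>
      have : v ^ (k + 2) = v ^ (k + 1) * v := by ring
      rw [this]
      exact mul_mem ih (NonUnitalAlgebra.self_mem_adjoin_singleton ℂ v)

lemma adjoin_vv_eq_top :
    NonUnitalAlgebra.adjoin ℂ ({vv d} : Set (Fin d → ℂ)) = ⊤ := by
  refine top_le_iff.mp ?_
  set v := vv d
  -- the matrix of powers
  set M : Matrix (Fin d) (Fin d) ℂ := Matrix.of fun k i => v i ^ ((k : ℕ) + 1) with hM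
  have hdet : IsUnit M := by
    have hMeq : M = (Matrix.vandermonde v).transpose * Matrix.diagonal v := by
      ext k i
      rw [Matrix.mul_diagonal, Matrix.transpose_apply, Matrix.vandermonde_apply]
      simp [hM, pow_succ]
    rw [hMeq]
    apply IsUnit.mul
    · rw [Matrix.isUnit_iff_isUnit_det, Matrix.det_transpose, isUnit_iff_ne_zero]
      exact Matrix.det_vandermonde_ne_zero_iff.mpr vv_injective
    · rw [Matrix.isUnit_iff_isUnit_det, Matrix.det_diagonal, isUnit_iff_ne_zero]
      exact Finset.prod_ne_zero_iff.mpr fun i _ => vv_ne_zero i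
  have hli : LinearIndependent ℂ (fun k : Fin d => v ^ ((k : ℕ) + 1)) := by
    have := Matrix.linearIndependent_rows_iff_isUnit.mpr hdet
    convert this using 1
    · funext k i
      rfl
    · rfl
  have hspan : Submodule.span ℂ (Set.range fun k : Fin d => v ^ ((k : ℕ) + 1)) = ⊤ :=
    hli.span_eq_top_of_card_eq_finrank' (by simp [Module.finrank_fin_fun])
  intro x _
  have hx : x ∈ Submodule.span ℂ (Set.range fun k : Fin d => v ^ ((k : ℕ) + 1)) := by
    rw [hspan]; trivial
  refine Submodule.span_le.mpr ?_ hx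
  rintro y ⟨k, rfl⟩
  exact pow_mem_adjoin v (k : ℕ)

end Aux

set_option synthInstance.maxHeartbeats 1000000 in
set_option maxHeartbeats 1000000 in
/-- **Theorem 3.17(i).** For every `d ≥ 1` the set `(ℓ∞ \ c₀) ∪ {0}` is `(d, 1)`-genalgebrable
and `(d, 1)`-C*-genalgebrable: there is a `d`-dimensional star-subalgebra `B` of `ℓ∞` meeting
`c₀` only at `0` that is generated (as an algebra, without closure) by a single element `g`. -/
theorem exists_singly_generated_star_subalgebra_of_dim
    (d : ℕ) (hd : 1 ≤ d) :
    ∃ (B : NonUnitalStarSubalgebra ℂ linf) (g : linf), g ∈ B ∧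
      (∀ y ∈ B, y ∈ c0 → y = 0) ∧
      Module.finrank ℂ B = d ∧
      NonUnitalAlgebra.adjoin ℂ ({g} : Set linf) = B.toNonUnitalSubalgebra := by
  set g : linf := phi hd (vv d) with hg
  have hadj : NonUnitalAlgebra.adjoin ℂ ({g} : Set linf) =
      NonUnitalSubalgebra.map (phi hd) ⊤ := by
    rw [← adjoin_vv_eq_top, NonUnitalAlgHom.map_adjoin_singleton]
  have hmem : ∀ x, x ∈ NonUnitalAlgebra.adjoin ℂ ({g} : Set linf) ↔ ∃ v, phi hd v = x := by
    intro x
    rw [hadj, NonUnitalSubalgebra.mem_map]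
    simp
  -- star closure
  have hstar : ∀ x ∈ NonUnitalAlgebra.adjoin ℂ ({g} : Set linf),
      star x ∈ NonUnitalAlgebra.adjoin ℂ ({g} : Set linf) := by
    intro x hx
    obtain ⟨v, rfl⟩ := (hmem x).mp hx
    refine (hmem _).mpr ⟨star v, ?_⟩
    apply lp.ext
    funext n
    rw [lp.coeFn_star]
    rfl
  set B : NonUnitalStarSubalgebra ℂ linf :=
    { toNonUnitalSubalgebra := NonUnitalAlgebra.adjoin ℂ ({g} : Set linf),
      star_mem' := fun {x} hx => hstar x hx } with hB
  refine ⟨B, g, NonUnitalAlgebra.self_mem_adjoin_singleton ℂ g, ?_, ?_, rfl⟩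
  · -- c0 condition
    intro y hy hy0
    obtain ⟨w, rfl⟩ := (hmem y).mp hy
    have hw : w = 0 := by
      funext i
      have htend : Tendsto (fun k : ℕ => (i : ℕ) + k * d) atTop atTop := by
        apply tendsto_atTop_mono (fun k => ?_) tendsto_id
        calc (k : ℕ) = k * 1 := (mul_one k).symm
        _ ≤ k * d := Nat.mul_le_mul_left k hd
        _ ≤ i + k * d := Nat.le_add_left _ _
      have hconst : Tendsto (fun _ : ℕ => w i) atTop (𝓝 (0 : ℂ)) := by
        have h2 := hy0.comp htend
        refine h2.congr fun k => ?_
        show (phi hd w : ∀ _ : ℕ, ℂ) ((i : ℕ) + k * d) = w i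
        rw [phi_apply]
        congr 1
        apply Fin.ext
        simp [Nat.add_mul_mod_self_right, Nat.mod_eq_of_lt i.isLt]
      exact (tendsto_nhds_unique hconst tendsto_const_nhds).symm
    rw [hw, map_zero]
  · -- finrank
    have e : (Fin d → ℂ) ≃ₗ[ℂ] B := by
      refine LinearEquiv.ofBijective
        { toFun := fun v => ⟨phi hd v, (hmem _).mpr ⟨v, rfl⟩⟩
          map_add' := fun v w => by ext1; exact map_add _ v w
          map_smul' := fun c v => by ext1; exact map_smul _ c v } ⟨?_, ?_⟩
      · intro v w h
        exact phi_injective hd (congrArg Subtype.val h)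
      · rintro ⟨x, hx⟩
        obtain ⟨v, rfl⟩ := (hmem x).mp hx
        exact ⟨v, rfl⟩
    have := e.finrank_eq
    rw [Module.finrank_fin_fun] at this
    exact this.symm
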